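/- Shuffle-compatibility implies submultiplicativity and multiplicativity of the pairing: for a shuffle-compatible partition Π of multi-indices, if u, v ∈ 𝒮(S)* then u ⧢ v ∈ 𝒮(S)*, |u ⧢ v|_x ≤ |u|_x · |v|_x, and ⟨u, x⟩⟨v, x⟩ = ⟨u ⧢ v, x⟩ for every group-like x ∈ 𝒮(S). -/

import Mathlib

/-- The extended tensor algebra `T((ℝ^d))`. -/
abbrev TA (d : ℕ) := List (Fin d) → ℝ

/-- The subword of `K` obtained by keeping exactly the positions in `s`. -/
def subword {d : ℕ} (K : List (Fin d)) (s : Finset (Fin K.length)) : List (Fin d) :=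
  ((List.finRange K.length).filter (fun i => i ∈ s)).map (fun i => K.get i)

/-- The shuffle product on `T((ℝ^d))`. -/
noncomputable def shMul {d : ℕ} (u v : TA d) : TA d :=
  fun K => ∑ s : Finset (Fin K.length), u (subword K s) * v (subword K sᶜ)

/-- The basis element `e_I`. -/
def delta {d : ℕ} (I : List (Fin d)) : TA d := fun J => if J = I then 1 else 0

/-- The set `𝒮(S)` of group-like elements with first level in `S`. -/
noncomputable def GroupLikeTA {d : ℕ} (S : Set (Fin d → ℝ)) : Set (TA d) :=
  {x | x [] = 1 ∧ (fun i => x [i]) ∈ S ∧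
    ∀ I J : List (Fin d), x I * x J = ∑' K : List (Fin d), shMul (delta I) (delta J) K * x K}

/-- Partitions of the set of all words, given by an index map `part`; each block contains
only words of one fixed length. -/
def SameLengthBlocks {d : ℕ} (part : List (Fin d) → ℕ) : Prop :=
  ∀ I J : List (Fin d), part I = part J → I.length = J.length

/-- Shuffle-compatibility of a partition: the shuffle of two blocks is supported in a
single block. -/
noncomputable def ShuffleCompatible {d : ℕ} (part : List (Fin d) → ℕ) : Prop :=
  ∀ k₁ k₂ : ℕ, ∃ k : ℕ, ∀ I J : List (Fin d), part I = k₁ → part J = k₂ →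
    ∀ K : List (Fin d), shMul (delta I) (delta J) K ≠ 0 → part K = k

/-- The block sum `Σ_{I ∈ Π_k} u_I x_I`. -/
noncomputable def blockSum {d : ℕ} (part : List (Fin d) → ℕ) (u x : TA d) (k : ℕ) : ℝ :=
  ∑' I : {I : List (Fin d) // part I = k}, u I * x I

/-- The semi-norm `|u|_x = Σ_k |Σ_{I ∈ Π_k} u_I x_I|`. -/
noncomputable def seminorm' {d : ℕ} (part : List (Fin d) → ℕ) (u x : TA d) : ℝ :=
  ∑' k : ℕ, |blockSum part u x k|

/-- Membership `u ∈ 𝒮(S)*`: `|u|_x < ∞` for every group-like `x`. -/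
noncomputable def DualMem {d : ℕ} (part : List (Fin d) → ℕ) (S : Set (Fin d → ℝ))
    (u : TA d) : Prop :=
  ∀ x ∈ GroupLikeTA S, Summable (fun k => |blockSum part u x k|)

/-- The level-`n` pairing `⟨π_n(u), π_n(x)⟩`. -/
noncomputable def levelPair {d : ℕ} (u x : TA d) (n : ℕ) : ℝ :=
  ∑' I : {I : List (Fin d) // I.length = n}, u I * x I

/-- The pairing `⟨u, x⟩ = Σ_n ⟨π_n(u), π_n(x)⟩`. -/
noncomputable def pairTA {d : ℕ} (u x : TA d) : ℝ := ∑' n : ℕ, levelPair u x n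

section Aux
variable {d : ℕ}

lemma len_finite (n : ℕ) : {l : List (Fin d) | l.length = n}.Finite := by
  have h : {l : List (Fin d) | l.length = n} ⊆
      Set.range (fun f : Fin n → Fin d => List.ofFn f) := by
    rintro l hl
    refine ⟨fun i => l.get (Fin.cast hl.symm i), ?_⟩
    apply List.ext_get (by simpa using hl.symm)
    intro i h1 h2
    simp
  exact (Set.finite_range _).subset h

lemma block_finite (part : List (Fin d) → ℕ) (hlen : SameLengthBlocks part)
    (k : ℕ) : {I : List (Fin d) | part I = k}.Finite := by
  rcases Set.eq_empty_or_nonempty {I : List (Fin d) | part I = k} with h | ⟨I₀, hI₀⟩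
  · simp [h]
  · refine (len_finite I₀.length).subset ?_
    intro I hI
    exact hlen I I₀ (hI.trans hI₀.symm)

noncomputable def Bk (part : List (Fin d) → ℕ) (hlen : SameLengthBlocks part)
    (k : ℕ) : Finset (List (Fin d)) := (block_finite part hlen k).toFinset

lemma mem_Bk {part : List (Fin d) → ℕ} {hlen : SameLengthBlocks part} {k : ℕ}
    {I : List (Fin d)} : I ∈ Bk part hlen k ↔ part I = k := by
  simp [Bk]

lemma blockSum_eq_sum (part : List (Fin d) → ℕ) (hlen : SameLengthBlocks part)
    (w x : TA d) (k : ℕ) :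
    blockSum part w x k = ∑ I ∈ Bk part hlen k, w I * x I := by
  have h1 : blockSum part w x k
      = ∑' I : ↥{I : List (Fin d) | part I = k}, w I * x I := rfl
  rw [h1, tsum_subtype {I : List (Fin d) | part I = k} (fun I => w I * x I)]
  refine (tsum_eq_sum (s := Bk part hlen k) ?_).trans (Finset.sum_congr rfl ?_)
  · exact fun I hI => Set.indicator_of_notMem (s := {I : List (Fin d) | part I = k}) (fun h => hI (mem_Bk.mpr h)) _
  · exact fun I hI => Set.indicator_of_mem (s := {I : List (Fin d) | part I = k}) (mem_Bk.mp hI) _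

noncomputable def Ln (d : ℕ) (n : ℕ) : Finset (List (Fin d)) := (len_finite n).toFinset

lemma mem_Ln {n : ℕ} {I : List (Fin d)} : I ∈ Ln d n ↔ I.length = n := by
  simp [Ln]

lemma levelPair_eq_sum (w x : TA d) (n : ℕ) :
    levelPair w x n = ∑ I ∈ Ln d n, w I * x I := by
  have h1 : levelPair w x n
      = ∑' I : ↥{I : List (Fin d) | I.length = n}, w I * x I := rfl
  rw [h1, tsum_subtype {I : List (Fin d) | I.length = n} (fun I => w I * x I)]
  refine (tsum_eq_sum (s := Ln d n) ?_).trans (Finset.sum_congr rfl ?_)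
  · exact fun I hI => Set.indicator_of_notMem (s := {I : List (Fin d) | I.length = n}) (fun h => hI (mem_Ln.mpr h)) _
  · exact fun I hI => Set.indicator_of_mem (s := {I : List (Fin d) | I.length = n}) (mem_Ln.mp hI) _

end Aux
section Aux2
variable {d : ℕ}

noncomputable def sig (part : List (Fin d) → ℕ) (hcompat : ShuffleCompatible part)
    (k₁ k₂ : ℕ) : ℕ := (hcompat k₁ k₂).choose

lemma sig_spec {part : List (Fin d) → ℕ} (hcompat : ShuffleCompatible part)
    {I J K : List (Fin d)} (hK : shMul (delta I) (delta J) K ≠ 0) :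
    part K = sig part hcompat (part I) (part J) :=
  (hcompat (part I) (part J)).choose_spec I J rfl rfl K hK

lemma shdd_ne_zero (K : List (Fin d)) (s : Finset (Fin K.length)) :
    shMul (delta (subword K s)) (delta (subword K sᶜ)) K ≠ 0 := by
  have h : (1:ℝ) ≤ shMul (delta (subword K s)) (delta (subword K sᶜ)) K := by
    have h2 := Finset.single_le_sum (f := fun t : Finset (Fin K.length) =>
      delta (subword K s) (subword K t) * delta (subword K sᶜ) (subword K tᶜ))
      (fun t _ => by simp only [delta]; split <;> split <;> norm_num)
      (Finset.mem_univ s)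
    simpa [shMul, delta] using h2
  positivity
end Aux2
section Aux3
variable {d : ℕ}

lemma grouplike_expand {part : List (Fin d) → ℕ} (hlen : SameLengthBlocks part)
    (hcompat : ShuffleCompatible part) {x : TA d}
    (hx3 : ∀ I J : List (Fin d), x I * x J = ∑' K, shMul (delta I) (delta J) K * x K)
    (I J : List (Fin d)) :
    x I * x J = ∑ K ∈ Bk part hlen (sig part hcompat (part I) (part J)),
      shMul (delta I) (delta J) K * x K := by
  refine (hx3 I J).trans (tsum_eq_sum ?_)
  intro K hK
  by_contra hne
  exact hK (mem_Bk.mpr (sig_spec hcompat (left_ne_zero_of_mul hne)))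

end Aux3
section Aux4
variable {d : ℕ}

lemma inner_swap (part : List (Fin d) → ℕ) (hlen : SameLengthBlocks part)
    (u v : TA d) (k₁ k₂ : ℕ) (K : List (Fin d)) :
    (∑ I ∈ Bk part hlen k₁, ∑ J ∈ Bk part hlen k₂,
      (u I * v J) * shMul (delta I) (delta J) K)
    = ∑ s : Finset (Fin K.length),
        (if part (subword K s) = k₁ ∧ part (subword K sᶜ) = k₂
          then u (subword K s) * v (subword K sᶜ) else 0) := by
  simp only [shMul, Finset.mul_sum]
  refine (Finset.sum_congr rfl (fun I _ => Finset.sum_comm (s := Bk part hlen k₂)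
    (t := Finset.univ) (f := fun J s => (u I * v J) *
      (delta I (subword K s) * delta J (subword K sᶜ))))).trans ?_
  refine (Finset.sum_comm (s := Bk part hlen k₁) (t := Finset.univ)
    (f := fun I s => ∑ J ∈ Bk part hlen k₂, (u I * v J) *
      (delta I (subword K s) * delta J (subword K sᶜ)))).trans ?_
  refine Finset.sum_congr rfl (fun s _ => ?_)
  simp only [delta, mul_ite, ite_mul, mul_zero, zero_mul, mul_one, one_mul,
    Finset.sum_ite_eq, Finset.sum_ite_eq', mem_Bk]
  by_cases hc2 : part (subword K sᶜ) = k₂ <;>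
    simp [hc2, Finset.sum_ite_eq, mem_Bk]

end Aux4
section Aux5
variable {d : ℕ}

lemma pair_expand (part : List (Fin d) → ℕ) (hlen : SameLengthBlocks part)
    (hcompat : ShuffleCompatible part) (u v x : TA d)
    (hx3 : ∀ I J : List (Fin d), x I * x J = ∑' K, shMul (delta I) (delta J) K * x K)
    (k₁ k₂ : ℕ) :
    blockSum part u x k₁ * blockSum part v x k₂
      = ∑ K ∈ Bk part hlen (sig part hcompat k₁ k₂),
          (∑ s : Finset (Fin K.length),
            if part (subword K s) = k₁ ∧ part (subword K sᶜ) = k₂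
              then u (subword K s) * v (subword K sᶜ) else 0) * x K := by
  rw [blockSum_eq_sum part hlen u x k₁, blockSum_eq_sum part hlen v x k₂,
    Finset.sum_mul_sum]
  have step1 : ∀ I ∈ Bk part hlen k₁, ∀ J ∈ Bk part hlen k₂,
      (u I * x I) * (v J * x J)
        = ∑ K ∈ Bk part hlen (sig part hcompat k₁ k₂),
            ((u I * v J) * shMul (delta I) (delta J) K) * x K := by
    intro I hI J hJ
    have hIk : part I = k₁ := mem_Bk.mp hI
    have hJk : part J = k₂ := mem_Bk.mp hJ
    have hgl := grouplike_expand hlen hcompat hx3 I J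
    rw [hIk, hJk] at hgl
    calc (u I * x I) * (v J * x J) = (u I * v J) * (x I * x J) := by ring
      _ = (u I * v J) * ∑ K ∈ Bk part hlen (sig part hcompat k₁ k₂),
            shMul (delta I) (delta J) K * x K := by rw [hgl]
      _ = _ := by rw [Finset.mul_sum]; exact Finset.sum_congr rfl fun K _ => by ring
  rw [Finset.sum_congr rfl (fun I hI => Finset.sum_congr rfl (step1 I hI))]
  rw [Finset.sum_congr rfl (fun I _ => Finset.sum_comm (s := Bk part hlen k₂)
    (t := Bk part hlen (sig part hcompat k₁ k₂))
    (f := fun J K => ((u I * v J) * shMul (delta I) (delta J) K) * x K))]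
  rw [Finset.sum_comm (s := Bk part hlen k₁)
    (t := Bk part hlen (sig part hcompat k₁ k₂))
    (f := fun I K => ∑ J ∈ Bk part hlen k₂,
      ((u I * v J) * shMul (delta I) (delta J) K) * x K)]
  refine Finset.sum_congr rfl (fun K _ => ?_)
  rw [← inner_swap part hlen u v k₁ k₂ K, Finset.sum_mul]
  exact Finset.sum_congr rfl fun I _ => by rw [Finset.sum_mul]

end Aux5
section Aux6
variable {d : ℕ}

lemma block_shuffle_eq (part : List (Fin d) → ℕ) (hlen : SameLengthBlocks part)
    (hcompat : ShuffleCompatible part) (u v x : TA d)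
    (hx3 : ∀ I J : List (Fin d), x I * x J = ∑' K, shMul (delta I) (delta J) K * x K)
    (k : ℕ) :
    blockSum part (shMul u v) x k
      = ∑' p : ((fun p : ℕ × ℕ => sig part hcompat p.1 p.2) ⁻¹' {k}),
          blockSum part u x (p : ℕ × ℕ).1 * blockSum part v x (p : ℕ × ℕ).2 := by
  classical
  have step1 : ∀ p : ((fun p : ℕ × ℕ => sig part hcompat p.1 p.2) ⁻¹' {k}),
      blockSum part u x (p : ℕ × ℕ).1 * blockSum part v x (p : ℕ × ℕ).2
        = ∑ K ∈ Bk part hlen k, ∑ s : Finset (Fin K.length),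
            (if part (subword K s) = (p : ℕ × ℕ).1 ∧ part (subword K sᶜ) = (p : ℕ × ℕ).2
              then u (subword K s) * v (subword K sᶜ) else 0) * x K := by
    intro p
    have hp : sig part hcompat (p : ℕ × ℕ).1 (p : ℕ × ℕ).2 = k := p.2
    rw [pair_expand part hlen hcompat u v x hx3 _ _, hp]
    exact Finset.sum_congr rfl fun K _ => Finset.sum_mul _ _ _
  rw [tsum_congr step1]
  have step2 : ∀ (K : List (Fin d)), K ∈ Bk part hlen k → ∀ s : Finset (Fin K.length),
      ∑' p : ((fun p : ℕ × ℕ => sig part hcompat p.1 p.2) ⁻¹' {k}),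
        (if part (subword K s) = (p : ℕ × ℕ).1 ∧ part (subword K sᶜ) = (p : ℕ × ℕ).2
          then u (subword K s) * v (subword K sᶜ) else 0) * x K
      = (u (subword K s) * v (subword K sᶜ)) * x K := by
    intro K hK s
    have hq0 : (fun p : ℕ × ℕ => sig part hcompat p.1 p.2)
        (part (subword K s), part (subword K sᶜ)) ∈ ({k} : Set ℕ) := by
      have h1 := sig_spec hcompat (shdd_ne_zero K s)
      have h2 : part K = k := mem_Bk.mp hK
      simp only [Set.mem_singleton_iff]
      rw [← h1, h2]
    set q0 : ((fun p : ℕ × ℕ => sig part hcompat p.1 p.2) ⁻¹' {k}) :=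
      ⟨(part (subword K s), part (subword K sᶜ)), hq0⟩ with hq0def
    have hzero : ∀ p, p ≠ q0 →
        (if part (subword K s) = (p : ℕ × ℕ).1 ∧ part (subword K sᶜ) = (p : ℕ × ℕ).2
          then u (subword K s) * v (subword K sᶜ) else 0) * x K = 0 := by
      intro p hp
      rw [if_neg, zero_mul]
      rintro ⟨h1, h2⟩
      exact hp (Subtype.ext (Prod.ext h1.symm h2.symm))
    rw [tsum_eq_single q0 hzero, if_pos ⟨rfl, rfl⟩]
  have hsummable : ∀ (K : List (Fin d)), K ∈ Bk part hlen k → ∀ s : Finset (Fin K.length),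
      Summable (fun p : ((fun p : ℕ × ℕ => sig part hcompat p.1 p.2) ⁻¹' {k}) =>
        (if part (subword K s) = (p : ℕ × ℕ).1 ∧ part (subword K sᶜ) = (p : ℕ × ℕ).2
          then u (subword K s) * v (subword K sᶜ) else 0) * x K) := by
    intro K hK s
    refine summable_of_ne_finset_zero (s := {(⟨(part (subword K s), part (subword K sᶜ)), ?_⟩ :
      ((fun p : ℕ × ℕ => sig part hcompat p.1 p.2) ⁻¹' {k}))}) ?_
    · show sig part hcompat (part (subword K s)) (part (subword K sᶜ)) = k
      rw [← sig_spec hcompat (shdd_ne_zero K s)]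
      exact mem_Bk.mp hK
    · intro p hp
      rw [if_neg, zero_mul]
      rintro ⟨h1, h2⟩
      exact hp (Finset.mem_singleton.mpr (Subtype.ext (Prod.ext h1.symm h2.symm)))
  rw [blockSum_eq_sum part hlen (shMul u v) x k,
    Summable.tsum_finsetSum (fun K hK => summable_sum (fun s _ => hsummable K hK s))]
  refine Finset.sum_congr rfl fun K hK => ?_
  rw [Summable.tsum_finsetSum (fun s _ => hsummable K hK s),
    Finset.sum_congr rfl (fun s _ => step2 K hK s), ← Finset.sum_mul]
  rfl

end Aux6
section Aux7
variable {d : ℕ}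

open Classical in
noncomputable def blen (part : List (Fin d) → ℕ) (k : ℕ) : ℕ :=
  if h : ∃ I, part I = k then h.choose.length else 0

lemma blen_part {part : List (Fin d) → ℕ} (hlen : SameLengthBlocks part)
    (I : List (Fin d)) : blen part (part I) = I.length := by
  rw [blen, dif_pos (⟨I, rfl⟩ : ∃ J, part J = part I)]
  exact hlen _ _ (Exists.choose_spec (⟨I, rfl⟩ : ∃ J, part J = part I))

lemma levelPair_fiber (part : List (Fin d) → ℕ) (hlen : SameLengthBlocks part)
    (w x : TA d) (n : ℕ) :
    levelPair w x n = ∑' k : ((blen part) ⁻¹' {n} : Set ℕ), blockSum part w x k := by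
  classical
  set Fn : Finset ℕ := (Ln d n).image part with hFn
  have hFn_len : ∀ k ∈ Fn, ∀ I : List (Fin d), part I = k → I.length = n := by
    intro k hk I hIk
    obtain ⟨I₀, hI₀, hI₀k⟩ := Finset.mem_image.mp hk
    exact (hlen I I₀ (hIk.trans hI₀k.symm)).trans (mem_Ln.mp hI₀)
  have hFn_blen : ∀ k ∈ Fn, blen part k = n := by
    intro k hk
    obtain ⟨I₀, hI₀, hI₀k⟩ := Finset.mem_image.mp hk
    rw [← hI₀k, blen_part hlen]
    exact mem_Ln.mp hI₀
  rw [tsum_subtype ((blen part) ⁻¹' {n} : Set ℕ) (blockSum part w x)]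
  rw [tsum_eq_sum (s := Fn) (f := Set.indicator ((blen part) ⁻¹' {n}) (blockSum part w x)) ?side]
  case side =>
    intro k hk
    by_cases hkn : blen part k = n
    · refine (Set.indicator_of_mem (s := (blen part) ⁻¹' {n}) hkn (blockSum part w x)).trans ?_
      have hempty : Bk part hlen k = ∅ := by
        refine Finset.eq_empty_of_forall_notMem (fun I hI => hk ?_)
        have hIk : part I = k := mem_Bk.mp hI
        have hIn : I.length = n := by rw [← hkn, ← hIk, blen_part hlen]
        exact hFn ▸ Finset.mem_image.mpr ⟨I, mem_Ln.mpr hIn, hIk⟩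
      rw [blockSum_eq_sum part hlen, hempty, Finset.sum_empty]
    · exact Set.indicator_of_notMem (s := (blen part) ⁻¹' {n}) hkn (blockSum part w x)
  rw [Finset.sum_congr rfl (fun k hk => Set.indicator_of_mem (s := (blen part) ⁻¹' {n}) (hFn_blen k hk) (blockSum part w x))]
  rw [levelPair_eq_sum w x n,
    ← Finset.sum_fiberwise_of_maps_to (g := part) (t := Fn)
      (fun I hI => Finset.mem_image_of_mem part hI) (fun I => w I * x I)]
  refine Finset.sum_congr rfl (fun k hk => ?_)
  rw [blockSum_eq_sum part hlen]
  refine Finset.sum_congr ?_ (fun _ _ => rfl)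
  ext I
  simp only [Finset.mem_filter, mem_Ln, mem_Bk]
  exact ⟨fun h => h.2, fun h => ⟨hFn_len k hk I h, h⟩⟩

lemma pair_blocks (part : List (Fin d) → ℕ) (hlen : SameLengthBlocks part)
    (w x : TA d) (hw : Summable (fun k => blockSum part w x k)) :
    pairTA w x = ∑' k, blockSum part w x k := by
  rw [pairTA, ← (hw.hasSum.tsum_fiberwise (blen part)).tsum_eq]
  exact tsum_congr (levelPair_fiber part hlen w x)

end Aux7
set_option maxHeartbeats 1000000 in
theorem shuffle_compatible_submultiplicative {d : ℕ}
    (Sset : Set (Fin d → ℝ)) (part : List (Fin d) → ℕ)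
    (hlen : SameLengthBlocks part) (hcompat : ShuffleCompatible part)
    (u v : TA d)
    (hu : DualMem part Sset u) (hv : DualMem part Sset v) :
    DualMem part Sset (shMul u v) ∧
    ∀ x ∈ GroupLikeTA Sset,
      seminorm' part (shMul u v) x ≤ seminorm' part u x * seminorm' part v x ∧
      pairTA u x * pairTA v x = pairTA (shMul u v) x := by
  have main : ∀ x ∈ GroupLikeTA Sset,
      (Summable fun k => |blockSum part (shMul u v) x k|) ∧
      seminorm' part (shMul u v) x ≤ seminorm' part u x * seminorm' part v x ∧
      pairTA u x * pairTA v x = pairTA (shMul u v) x := by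
    intro x hx
    have hx3 : ∀ I J : List (Fin d), x I * x J
        = ∑' K, shMul (delta I) (delta J) K * x K := hx.2.2
    set A : ℕ → ℝ := fun k => blockSum part u x k with hA_def
    set B : ℕ → ℝ := fun k => blockSum part v x k with hB_def
    have hA : Summable (fun k => |A k|) := hu x hx
    have hB : Summable (fun k => |B k|) := hv x hx
    have hAs : Summable A := summable_abs_iff.mp hA
    have hBs : Summable B := summable_abs_iff.mp hB
    set f : ℕ × ℕ → ℝ := fun p => A p.1 * B p.2 with hf_def
    set g : ℕ × ℕ → ℕ := fun p => sig part hcompat p.1 p.2 with hg_def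
    have habs : Summable (fun p : ℕ × ℕ => |A p.1| * |B p.2|) :=
      hA.mul_of_nonneg hB (fun _ => abs_nonneg _) (fun _ => abs_nonneg _)
    have hfabs : Summable (fun p => |f p|) :=
      by simpa [hf_def, abs_mul] using habs
    have hf : Summable f := summable_abs_iff.mp hfabs
    have key : ∀ k, blockSum part (shMul u v) x k = ∑' p : g ⁻¹' {k}, f p :=
      block_shuffle_eq part hlen hcompat u v x hx3
    have hfiber : HasSum (fun k => ∑' p : g ⁻¹' {k}, |f p|) (∑' p, |f p|) :=
      hfabs.hasSum.tsum_fiberwise g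
    have bound : ∀ k, |blockSum part (shMul u v) x k| ≤ ∑' p : g ⁻¹' {k}, |f p| := by
      intro k
      rw [key k]
      have hs : Summable (fun p : g ⁻¹' {k} => ‖f p‖) := by
        exact hfabs.subtype (g ⁻¹' {k})
      simpa [Real.norm_eq_abs] using norm_tsum_le_tsum_norm hs
    have hsum1 : Summable (fun k => |blockSum part (shMul u v) x k|) :=
      Summable.of_nonneg_of_le (fun k => abs_nonneg _) bound hfiber.summable
    refine ⟨hsum1, ?_, ?_⟩
    · have step1 : seminorm' part (shMul u v) x ≤ ∑' k, ∑' p : g ⁻¹' {k}, |f p| :=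
        Summable.tsum_le_tsum bound hsum1 hfiber.summable
      have step2 : (∑' k, ∑' p : g ⁻¹' {k}, |f p|) = ∑' p, |f p| := hfiber.tsum_eq
      have step3 : (∑' p : ℕ × ℕ, |f p|)
          = (∑' k, |A k|) * (∑' k, |B k|) := by
        rw [tsum_mul_tsum_of_summable_norm (by simpa [Real.norm_eq_abs] using hA)
          (by simpa [Real.norm_eq_abs] using hB)]
        exact tsum_congr fun p => abs_mul (A p.1) (B p.2)
      calc seminorm' part (shMul u v) x ≤ ∑' k, ∑' p : g ⁻¹' {k}, |f p| := step1
        _ = (∑' k, |A k|) * (∑' k, |B k|) := step2.trans step3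
        _ = seminorm' part u x * seminorm' part v x := rfl
    · calc pairTA u x * pairTA v x
          = (∑' k, A k) * (∑' k, B k) := by
            rw [pair_blocks part hlen u x hAs, pair_blocks part hlen v x hBs]
        _ = ∑' p : ℕ × ℕ, f p :=
            tsum_mul_tsum_of_summable_norm (by simpa [Real.norm_eq_abs] using hA)
              (by simpa [Real.norm_eq_abs] using hB)
        _ = ∑' k, ∑' p : g ⁻¹' {k}, f p := (hf.hasSum.tsum_fiberwise g).tsum_eq.symm
        _ = ∑' k, blockSum part (shMul u v) x k := tsum_congr fun k => (key k).symm
        _ = pairTA (shMul u v) x :=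
            (pair_blocks part hlen (shMul u v) x (summable_abs_iff.mp hsum1)).symm
  exact ⟨fun x hx => (main x hx).1, fun x hx => (main x hx).2⟩
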